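/- arXiv:1002.4059 — 4 statements merged into one kernel-verified Lean document; each statement's English description precedes it below -/
import Mathlib

section
/- Let Ω ⊂ ℝ² be a bounded open set which is Lipschitz with constants r and L. Then for every integer n ≥ 0, the one-dimensional Hausdorff measure of ∂Ω intersected with the closed annulus B̄_{(n+1)r} \ B_{nr} (centered at the origin) satisfies ℋ¹(∂Ω ∩ (B̄_{(n+1)r} \ B_{nr})) ≤ C(L) r (n+1), where one may take C(L) = 48 √(1+L²). -/
open MeasureTheory Metric Set

noncomputable section

abbrev E2 : Type := EuclideanSpace ℝ (Fin 2)

/-- A bounded open set `Ω ⊆ ℝ²` is Lipschitz with constants `r` and `L`: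
at every boundary point, after a rigid change of coordinates taking the point to the origin,
`Ω` coincides in the ball of radius `r` with the subgraph of an `L`-Lipschitz function
vanishing at `0`. -/
def IsLipDomain (r L : ℝ) (Ω : Set E2) : Prop :=
  ∀ x ∈ frontier Ω, ∃ (A : E2 ≃ᵢ E2) (φ : ℝ → ℝ),
    A x = 0 ∧ LipschitzWith (Real.toNNReal L) φ ∧ φ 0 = 0 ∧
    ∀ y ∈ ball x r, (y ∈ Ω ↔ (A y) 1 < φ ((A y) 0))

open ENNReal in
/-- Graph map of a function `φ : ℝ → ℝ` into the Euclidean plane. -/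
def grMap (φ : ℝ → ℝ) (t : ℝ) : E2 := (EuclideanSpace.equiv (Fin 2) ℝ).symm ![t, φ t]

lemma grMap_lip (L : ℝ) (hL : 0 ≤ L) (φ : ℝ → ℝ) (hφ : LipschitzWith (Real.toNNReal L) φ) :
    LipschitzWith (Real.sqrt (1 + L^2)).toNNReal (grMap φ) := by
  rw [lipschitzWith_iff_dist_le_mul]
  intro s t
  have hd : dist (grMap φ s) (grMap φ t) = Real.sqrt (dist s t ^ 2 + dist (φ s) (φ t) ^ 2) := by
    rw [EuclideanSpace.dist_eq, Fin.sum_univ_two]; simp [grMap]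
  rw [hd]
  have h1 : dist (φ s) (φ t) ≤ L * dist s t := by
    have := hφ.dist_le_mul s t
    rwa [Real.coe_toNNReal _ hL] at this
  calc Real.sqrt (dist s t ^ 2 + dist (φ s) (φ t) ^ 2)
      ≤ Real.sqrt ((1 + L^2) * dist s t ^ 2) := by
        apply Real.sqrt_le_sqrt
        nlinarith [dist_nonneg (x := s) (y := t), dist_nonneg (x := φ s) (y := φ t)]
    _ = Real.sqrt (1 + L^2) * dist s t := by
        rw [Real.sqrt_mul (by positivity), Real.sqrt_sq dist_nonneg]
    _ = _ := by rw [Real.coe_toNNReal _ (Real.sqrt_nonneg _)]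

lemma abs_coord_le_norm (v : E2) (i : Fin 2) : |v i| ≤ ‖v‖ := by
  rw [EuclideanSpace.norm_eq]
  rw [← Real.sqrt_sq_eq_abs]
  apply Real.sqrt_le_sqrt
  fin_cases i <;> rw [Fin.sum_univ_two] <;>
    simp [Real.norm_eq_abs, sq_abs] <;> positivity

/-- Local estimate: near each boundary point, the boundary lies on a Lipschitz graph,
hence has controlled `ℋ¹` measure. -/
lemma lipDomain_local_bound (r L : ℝ) (hr : 0 < r) (hL : 0 < L) (Ω : Set E2) (hΩo : IsOpen Ω)
    (hlip : IsLipDomain r L Ω) (x : E2) (hx : x ∈ frontier Ω) :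
    μH[1] (frontier Ω ∩ ball x (r/2)) ≤ ENNReal.ofReal (Real.sqrt (1 + L^2) * r) := by
  obtain ⟨A, φ, hA0, hφ, hφ0, hiff⟩ := hlip x hx
  set g : ℝ → E2 := fun t => A.symm (grMap φ t) with hg
  have hgl : LipschitzWith (Real.sqrt (1 + L^2)).toNNReal g :=
    (A.symm.isometry.lipschitz.comp (grMap_lip L hL.le φ hφ)).weaken (by simp)
  have hsub : frontier Ω ∩ ball x (r/2) ⊆ g '' Icc (-(r/2)) (r/2) := by
    rintro y ⟨hyf, hyb⟩
    have hyb' : y ∈ ball x r := by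
      rw [mem_ball] at hyb ⊢; linarith [hyb]
    have hnot : ¬ ((A y) 1 < φ ((A y) 0)) := by
      intro h
      exact ((hΩo.frontier_eq ▸ hyf).2) ((hiff y hyb').mpr h)
    have hle : (A y) 1 ≤ φ ((A y) 0) := by
      have hycl : y ∈ closure Ω := (hΩo.frontier_eq ▸ hyf).1
      have hmem : y ∈ closure (Ω ∩ ball x r) := by
        rw [_root_.mem_closure_iff] at hycl ⊢
        intro o ho hyo
        obtain ⟨z, hz1, hz2⟩ := hycl (o ∩ ball x r) (ho.inter isOpen_ball)
          ⟨hyo, hyb'⟩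
        exact ⟨z, hz1.1, hz2, hz1.2⟩
      have hc0 : Continuous (fun v : E2 => v 0) :=
        (continuous_apply (0 : Fin 2)).comp (PiLp.continuous_ofLp 2 (fun _ : Fin 2 => ℝ))
      have hc1 : Continuous (fun v : E2 => v 1) :=
        (continuous_apply (1 : Fin 2)).comp (PiLp.continuous_ofLp 2 (fun _ : Fin 2 => ℝ))
      have hcont : Continuous (fun z : E2 => φ ((A z) 0) - (A z) 1) :=
        ((hφ.continuous).comp (hc0.comp A.continuous)).sub (hc1.comp A.continuous)
      have hcl : IsClosed {z : E2 | 0 ≤ φ ((A z) 0) - (A z) 1} :=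
        isClosed_le continuous_const hcont
      have hsub2 : Ω ∩ ball x r ⊆ {z : E2 | 0 ≤ φ ((A z) 0) - (A z) 1} := by
        rintro z ⟨hz1, hz2⟩
        have := (hiff z hz2).mp hz1
        simp only [mem_setOf_eq]; linarith
      have := (closure_minimal hsub2 hcl) hmem
      simp only [mem_setOf_eq] at this; linarith
    have heq : (A y) 1 = φ ((A y) 0) := le_antisymm hle (not_lt.mp hnot)
    refine ⟨(A y) 0, ?_, ?_⟩
    · have h1 : |(A y) 0| ≤ ‖A y‖ := abs_coord_le_norm _ _
      have h2 : ‖A y‖ = dist y x := by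
        rw [← dist_zero_right, ← hA0, A.dist_eq]
      rw [mem_ball] at hyb
      rw [h2] at h1
      constructor <;> [linarith [abs_le.mp (h1.trans hyb.le)]; skip]
      exact (abs_le.mp (h1.trans hyb.le)).2
    · have : grMap φ ((A y) 0) = A y := by
        ext i
        fin_cases i <;> simp [grMap, heq]
      rw [hg]; simp only [this]; exact A.symm_apply_apply y
  calc μH[1] (frontier Ω ∩ ball x (r/2)) ≤ μH[1] (g '' Icc (-(r/2)) (r/2)) :=
        measure_mono hsub
    _ ≤ ((Real.sqrt (1 + L^2)).toNNReal : ENNReal) ^ (1:ℝ) * μH[1] (Icc (-(r/2)) (r/2)) :=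
        LipschitzOnWith.hausdorffMeasure_image_le
          (LipschitzWith.lipschitzOnWith hgl (s := Icc (-(r/2)) (r/2))) zero_le_one
    _ = ENNReal.ofReal (Real.sqrt (1 + L^2) * r) := by
        rw [MeasureTheory.hausdorffMeasure_real, Real.volume_Icc,
          ENNReal.rpow_one, ENNReal.ofReal_mul (Real.sqrt_nonneg _)]
        norm_num
        rfl

/-- Packing bound: an `r/2`-separated set in the annulus has at most `48(n+1)` points. -/
lemma annulus_packing (r : ℝ) (hr : 0 < r) (n : ℕ) (S : Finset E2)
    (hS : ∀ s ∈ S, s ∈ closedBall (0:E2) ((n+1)*r) \ ball (0:E2) (n*r))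
    (hsep : ∀ s ∈ S, ∀ t ∈ S, s ≠ t → r/2 ≤ dist s t) :
    (S.card : ℝ) ≤ 48 * (n+1) := by
  set v : ENNReal := volume (ball (0:E2) 1) with hv
  have hvt : v ≠ ⊤ := measure_ball_lt_top.ne
  have hv0 : v ≠ 0 := (measure_ball_pos volume _ one_pos).ne'
  have hrk : Module.finrank ℝ E2 = 2 := by simp
  have hvol : ∀ s : E2, volume (ball s (r/4)) = ENNReal.ofReal ((r/4)^2) * v := by
    intro s
    rw [Measure.addHaar_ball volume s (by positivity : (0:ℝ) ≤ r/4), hrk]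
  have hdisj : (↑S : Set E2).PairwiseDisjoint (fun s => ball s (r/4)) := by
    intro s hs t ht hst
    apply ball_disjoint_ball
    have := hsep s hs t ht hst
    linarith
  have hsum : ∑ s ∈ S, volume (ball s (r/4)) = volume (⋃ s ∈ S, ball s (r/4)) :=
    (measure_biUnion_finset hdisj (fun s _ => measurableSet_ball)).symm
  have hcont : (⋃ s ∈ S, ball s (r/4)) ⊆
      closedBall (0:E2) ((n+1)*r + r/4) \ ball (0:E2) (n*r - r/4) := by
    intro z hz
    simp only [mem_iUnion, exists_prop] at hz
    obtain ⟨s, hsS, hzs⟩ := hz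
    obtain ⟨hs1, hs2⟩ := hS s hsS
    rw [mem_closedBall, dist_zero_right] at hs1
    rw [mem_ball, dist_zero_right, not_lt] at hs2
    rw [mem_ball] at hzs
    have hzs' : ‖z - s‖ < r/4 := by
      rw [← dist_eq_norm]; exact hzs
    constructor
    · rw [mem_closedBall, dist_zero_right]
      calc ‖z‖ ≤ ‖s‖ + ‖z - s‖ := norm_le_insert' z s
        _ ≤ (n+1)*r + r/4 := add_le_add hs1 hzs'.le
    · rw [mem_ball, dist_zero_right, not_lt]
      have h2 : ‖s‖ - ‖z‖ ≤ ‖z - s‖ := by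
        have := norm_sub_norm_le s z
        rwa [norm_sub_rev s z] at this
      linarith
  have hbig : volume (closedBall (0:E2) ((n+1)*r + r/4) \ ball (0:E2) (n*r - r/4))
      ≤ ENNReal.ofReal (3*(n+1)*r^2) * v := by
    rcases Nat.eq_zero_or_pos n with hn | hn
    · have h0 : (n:ℝ) = 0 := by rw [hn]; simp
      calc volume (closedBall (0:E2) ((n+1)*r + r/4) \ ball (0:E2) (n*r - r/4))
          ≤ volume (closedBall (0:E2) ((n+1)*r + r/4)) := measure_mono diff_subset
        _ = ENNReal.ofReal (((n+1)*r + r/4)^2) * v := by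
            rw [Measure.addHaar_closedBall volume _ (by positivity : (0:ℝ) ≤ (n+1)*r + r/4), hrk]
        _ ≤ ENNReal.ofReal (3*(n+1)*r^2) * v := by
            apply mul_le_mul_left
            apply ENNReal.ofReal_le_ofReal
            rw [h0]; nlinarith
    · have h1 : (1:ℝ) ≤ n := by exact_mod_cast hn
      have hρ : (0:ℝ) ≤ n*r - r/4 := by nlinarith
      have hsub : ball (0:E2) (n*r - r/4) ⊆ closedBall (0:E2) ((n+1)*r + r/4) := by
        apply ball_subset_closedBall.trans
        apply closedBall_subset_closedBall
        nlinarith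
      rw [measure_diff hsub measurableSet_ball.nullMeasurableSet measure_ball_lt_top.ne]
      rw [Measure.addHaar_closedBall volume _ (by positivity : (0:ℝ) ≤ (n+1)*r + r/4), hrk]
      rw [Measure.addHaar_ball volume _ hρ, hrk]
      rw [← ENNReal.sub_mul (fun _ _ => hvt)]
      apply mul_le_mul_left
      rw [← ENNReal.ofReal_sub _ (by positivity)]
      apply ENNReal.ofReal_le_ofReal
      nlinarith
  have key : (S.card : ENNReal) * ENNReal.ofReal ((r/4)^2) * v
      ≤ ENNReal.ofReal (3*(n+1)*r^2) * v := by
    calc (S.card : ENNReal) * ENNReal.ofReal ((r/4)^2) * v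
        = ∑ s ∈ S, volume (ball s (r/4)) := by
          rw [Finset.sum_congr rfl (fun s _ => hvol s), Finset.sum_const, nsmul_eq_mul,
            mul_assoc]
      _ = volume (⋃ s ∈ S, ball s (r/4)) := hsum
      _ ≤ _ := le_trans (measure_mono hcont) hbig
  rw [ENNReal.mul_le_mul_iff_left hv0 hvt] at key
  have key2 : ENNReal.ofReal ((S.card : ℝ) * (r/4)^2) ≤ ENNReal.ofReal (3*(n+1)*r^2) := by
    rwa [ENNReal.ofReal_mul (by positivity), ENNReal.ofReal_natCast]
  rw [ENNReal.ofReal_le_ofReal_iff (by positivity)] at key2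
  have hr2 : (0:ℝ) < r^2 := by positivity
  have h3 : (S.card : ℝ) * r^2 ≤ 48*(n+1) * r^2 := by nlinarith
  exact le_of_mul_le_mul_right h3 hr2

theorem stmt4 (r L : ℝ) (hr : 0 < r) (hL : 0 < L) (Ω : Set E2) (hΩo : IsOpen Ω)
    (hΩb : Bornology.IsBounded Ω) (hlip : IsLipDomain r L Ω) (n : ℕ) :
    μH[1] (frontier Ω ∩ (closedBall (0 : E2) ((n + 1) * r) \ ball (0 : E2) (n * r))) ≤
      ENNReal.ofReal (48 * Real.sqrt (1 + L ^ 2) * r * (n + 1)) := by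
  classical
  set K : Set E2 := frontier Ω ∩ (closedBall (0 : E2) ((n + 1) * r) \ ball (0 : E2) (n * r))
    with hKdef
  have hpack : ∀ S : Finset E2, (↑S ⊆ K) → (∀ s ∈ S, ∀ t ∈ S, s ≠ t → r/2 ≤ dist s t) →
      S.card ≤ 48*(n+1) := by
    intro S h1 h2
    have h := annulus_packing r hr n S (fun s hs => (h1 hs).2) h2
    have h' : (S.card : ℝ) ≤ ((48*(n+1) : ℕ) : ℝ) := by push_cast; linarith
    exact_mod_cast h'
  have hloc : ∀ x ∈ frontier Ω,
      μH[1] (frontier Ω ∩ ball x (r/2)) ≤ ENNReal.ofReal (Real.sqrt (1 + L^2) * r) :=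
    fun x hx => lipDomain_local_bound r L hr hL Ω hΩo hlip x hx
  set P : ℕ → Prop := fun k => ∃ S : Finset E2, (↑S ⊆ K) ∧
    (∀ s ∈ S, ∀ t ∈ S, s ≠ t → r/2 ≤ dist s t) ∧ S.card = k with hP
  have hP0 : P 0 := ⟨∅, by simp, by simp, rfl⟩
  have hPbd : ∀ k, P k → k ≤ 48*(n+1) := by
    rintro k ⟨S, h1, h2, h3⟩
    exact h3 ▸ hpack S h1 h2
  set N := 48*(n+1) with hN
  set m := Nat.findGreatest P N with hm
  have hPm : P m := Nat.findGreatest_spec (Nat.zero_le N) hP0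
  obtain ⟨S, hSK, hSsep, hScard⟩ := hPm
  have hcover : K ⊆ ⋃ s ∈ S, (frontier Ω ∩ ball s (r/2)) := by
    intro y hy
    by_contra hyn
    simp only [mem_iUnion, exists_prop, not_exists, not_and] at hyn
    have hfar : ∀ s ∈ S, r/2 ≤ dist y s := by
      intro s hs
      by_contra h
      exact hyn s hs ⟨hy.1, by rw [mem_ball]; linarith [not_le.mp h]⟩
    have hyS : y ∉ S := by
      intro h
      have := hfar y h
      simp at this
      linarith
    have hP1 : P (m + 1) := by
      refine ⟨insert y S, ?_, ?_, ?_⟩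
      · intro z hz
        rcases Finset.mem_insert.mp (by exact_mod_cast hz) with h | h
        · exact h ▸ hy
        · exact hSK h
      · intro s hs t ht hst
        rcases Finset.mem_insert.mp hs with h1 | h1 <;>
          rcases Finset.mem_insert.mp ht with h2 | h2
        · exact absurd (h1.trans h2.symm) hst
        · exact h1 ▸ hfar t h2
        · rw [dist_comm]; exact h2 ▸ hfar s h1
        · exact hSsep s h1 t h2 hst
      · rw [Finset.card_insert_of_notMem hyS, hScard]
    have := Nat.le_findGreatest (hPbd _ hP1) hP1
    omega
  calc μH[1] K ≤ μH[1] (⋃ s ∈ S, (frontier Ω ∩ ball s (r/2))) := measure_mono hcover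
    _ ≤ ∑ s ∈ S, μH[1] (frontier Ω ∩ ball s (r/2)) := measure_biUnion_finset_le _ _
    _ ≤ ∑ _s ∈ S, ENNReal.ofReal (Real.sqrt (1 + L^2) * r) := by
        apply Finset.sum_le_sum
        intro s hs
        exact hloc s ((hSK hs).1)
    _ = (S.card : ENNReal) * ENNReal.ofReal (Real.sqrt (1 + L^2) * r) := by
        rw [Finset.sum_const, nsmul_eq_mul]
    _ ≤ (N : ENNReal) * ENNReal.ofReal (Real.sqrt (1 + L^2) * r) := by
        apply mul_le_mul_left
        exact_mod_cast Nat.cast_le.mpr (hScard ▸ hPbd m ⟨S, hSK, hSsep, hScard⟩)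
    _ ≤ ENNReal.ofReal (48 * Real.sqrt (1 + L ^ 2) * r * (n + 1)) := by
        rw [← ENNReal.ofReal_natCast, ← ENNReal.ofReal_mul (by positivity)]
        apply ENNReal.ofReal_le_ofReal
        have hcast : ((N : ℕ) : ℝ) = 48 * ((n:ℝ)+1) := by rw [hN]; push_cast; ring
        rw [hcast]
        nlinarith [Real.sqrt_nonneg (1 + L^2)]
end
end

section
/- Let Ω ⊂ ℝ² be a bounded open set which is Lipschitz with constants r and L, and assume Ω ⊂ B_R with R ≥ 10 r. Then the perimeter of Ω, which equals ℋ¹(∂Ω), satisfies ℋ¹(∂Ω) ≤ C₁(L) R²/r, where one may take C₁(L) = (1/2)(11/9)² · 48 √(1+L²). -/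
open MeasureTheory Metric Set

noncomputable section

def gmap (φ : ℝ → ℝ) (t : ℝ) : E2 := (WithLp.equiv 2 (Fin 2 → ℝ)).symm ![t, φ t]

lemma coord_abs_le (x : E2) (i : Fin 2) : |x i| ≤ ‖x‖ := by
  rw [EuclideanSpace.norm_eq, ← Real.sqrt_sq_eq_abs]
  apply Real.sqrt_le_sqrt
  calc (x i)^2 = ‖x i‖^2 := by rw [Real.norm_eq_abs, sq_abs]
  _ ≤ ∑ j, ‖x j‖^2 := Finset.single_le_sum (f := fun j => ‖x j‖^2)
      (fun j _ => sq_nonneg _) (Finset.mem_univ i)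

lemma graph_lip {L : ℝ} {φ : ℝ → ℝ} (hφ : LipschitzWith (Real.toNNReal L) φ) (hL : 0 ≤ L) :
    LipschitzWith (Real.toNNReal (Real.sqrt (1 + L^2))) (gmap φ) := by
  rw [lipschitzWith_iff_dist_le_mul]
  intro s t
  have hd : dist (gmap φ s) (gmap φ t)
      = Real.sqrt (dist s t ^ 2 + dist (φ s) (φ t) ^ 2) := by
    rw [EuclideanSpace.dist_eq, Fin.sum_univ_two]; rfl
  rw [hd]
  have hφd : dist (φ s) (φ t) ≤ L * dist s t := by
    have := hφ.dist_le_mul s t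
    rwa [Real.coe_toNNReal _ hL] at this
  have key : dist s t ^ 2 + dist (φ s) (φ t) ^ 2 ≤ (1 + L^2) * dist s t ^ 2 := by
    have : dist (φ s) (φ t) ^ 2 ≤ (L * dist s t)^2 := by
      apply sq_le_sq' _ hφd
      nlinarith [dist_nonneg (x := φ s) (y := φ t)]
    nlinarith
  calc Real.sqrt (dist s t ^2 + dist (φ s) (φ t) ^2) ≤ Real.sqrt ((1 + L^2) * dist s t ^2) :=
        Real.sqrt_le_sqrt key
    _ = Real.sqrt (1 + L^2) * dist s t := by
        rw [Real.sqrt_mul (by positivity), Real.sqrt_sq dist_nonneg]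
    _ = (Real.toNNReal (Real.sqrt (1 + L^2)) : ℝ) * dist s t := by
        rw [Real.coe_toNNReal _ (Real.sqrt_nonneg _)]

lemma graph_measure {L r : ℝ} {φ : ℝ → ℝ} (hφ : LipschitzWith (Real.toNNReal L) φ)
    (hL : 0 ≤ L) :
    μH[1] (gmap φ '' Icc (-r) r) ≤ ENNReal.ofReal (Real.sqrt (1 + L^2) * (2 * r)) := by
  calc μH[1] (gmap φ '' Icc (-r) r)
      ≤ ((Real.toNNReal (Real.sqrt (1 + L^2)) : ENNReal)) ^ (1:ℝ) * μH[1] (Icc (-r) r) :=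
        (graph_lip hφ hL).hausdorffMeasure_image_le zero_le_one _
    _ = ENNReal.ofReal (Real.sqrt (1 + L^2)) * ENNReal.ofReal (2 * r) := by
        rw [ENNReal.rpow_one, hausdorffMeasure_real, Real.volume_Icc,
          show r - -r = 2*r by ring]
        rfl
    _ = ENNReal.ofReal (Real.sqrt (1 + L^2) * (2 * r)) := by
        rw [ENNReal.ofReal_mul (Real.sqrt_nonneg _)]

lemma local_bound {r L : ℝ} (hr : 0 < r) (hL : 0 ≤ L) {Ω : Set E2} (hΩo : IsOpen Ω)
    {x : E2} (A : E2 ≃ᵢ E2) (φ : ℝ → ℝ) (hA : A x = 0)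
    (hφ : LipschitzWith (Real.toNNReal L) φ)
    (hiff : ∀ y ∈ ball x r, (y ∈ Ω ↔ (A y) 1 < φ ((A y) 0))) :
    μH[1] (frontier Ω ∩ ball x r) ≤ ENNReal.ofReal (Real.sqrt (1 + L^2) * (2 * r)) := by
  have hc0 : Continuous (fun z : E2 => (A z) 0) :=
    (EuclideanSpace.proj (0 : Fin 2) : E2 →L[ℝ] ℝ).continuous.comp A.continuous
  have hc1 : Continuous (fun z : E2 => (A z) 1) :=
    (EuclideanSpace.proj (1 : Fin 2) : E2 →L[ℝ] ℝ).continuous.comp A.continuous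
  have hsub : frontier Ω ∩ ball x r ⊆ A.symm '' (gmap φ '' Icc (-r) r) := by
    rintro y ⟨hyf, hyb⟩
    have hynΩ : y ∉ Ω := by
      intro h
      exact (hΩo.frontier_eq ▸ hyf).2 h
    have hle : φ ((A y) 0) ≤ (A y) 1 := le_of_not_gt fun h => hynΩ ((hiff y hyb).2 h)
    have heq : (A y) 1 = φ ((A y) 0) := by
      rcases eq_or_lt_of_le hle with h | h
      · exact h.symm
      · exfalso
        set U := ball x r ∩ {z : E2 | φ ((A z) 0) < (A z) 1} with hU
        have hUo : IsOpen U := isOpen_ball.inter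
          (isOpen_lt ((hφ.continuous).comp hc0) hc1)
        have hyU : y ∈ U := ⟨hyb, h⟩
        have hUΩ : U ∩ Ω = ∅ := by
          ext z; simp only [mem_inter_iff, mem_empty_iff_false, iff_false, not_and]
          rintro ⟨hz1, hz2⟩ hzΩ
          exact absurd ((hiff z hz1).1 hzΩ) (not_lt.2 (le_of_lt hz2))
        have : y ∉ closure Ω := by
          intro hcl
          rcases mem_closure_iff.1 hcl U hUo hyU with ⟨z, hz⟩
          rw [inter_comm] at hUΩ
          exact absurd hz (by rw [inter_comm, hUΩ]; exact notMem_empty z)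
        exact this hyf.1
    refine ⟨A y, ⟨(A y) 0, ?_, ?_⟩, A.symm_apply_apply y⟩
    · have : |(A y) 0| ≤ ‖A y‖ := coord_abs_le _ _
      have hnorm : ‖A y‖ < r := by
        have : dist (A y) (A x) = dist y x := A.dist_eq y x
        rw [hA, dist_zero_right] at this
        rw [this]
        exact mem_ball.1 hyb
      constructor <;> [linarith [abs_le.1 (this.trans hnorm.le)];
        linarith [(abs_le.1 (this.trans hnorm.le)).2]]
    · ext i
      fin_cases i
      · rfl
      · exact heq.symm
  calc μH[1] (frontier Ω ∩ ball x r) ≤ μH[1] (A.symm '' (gmap φ '' Icc (-r) r)) :=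
        measure_mono hsub
    _ = μH[1] (gmap φ '' Icc (-r) r) := A.symm.hausdorffMeasure_image 1 _
    _ ≤ _ := graph_measure hφ hL


lemma card_bound {r R : ℝ} (hr : 0 < r) (hrR : r ≤ R) {t : Finset E2}
    (htR : ∀ x ∈ t, x ∈ closedBall (0:E2) R)
    (hsep : ∀ x ∈ t, ∀ y ∈ t, x ≠ y → r ≤ dist x y) :
    (t.card : ℝ) * (r/2)^2 ≤ (2*R)^2 := by
  set v := volume (ball (0:E2) 1) with hv
  have hvpos : 0 < v := measure_ball_pos _ _ one_pos
  have hvlt : v < ⊤ := measure_ball_lt_top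
  have hdisj : (t : Set E2).PairwiseDisjoint (fun x => ball x (r/2)) := by
    intro x hx y hy hxy
    apply ball_disjoint_ball
    calc r/2 + r/2 = r := by ring
      _ ≤ dist x y := hsep x hx y hy hxy
  have hmeas : ∀ x ∈ t, MeasurableSet (ball x (r/2)) := fun x _ => measurableSet_ball
  have hUnion : (⋃ x ∈ t, ball x (r/2)) ⊆ ball (0:E2) (2*R) := by
    intro z hz
    simp only [mem_iUnion] at hz
    obtain ⟨x, hx, hzx⟩ := hz
    have h1 : dist z x < r/2 := mem_ball.1 hzx
    have h2 : dist x 0 ≤ R := mem_closedBall.1 (htR x hx)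
    have : dist z (0:E2) < 2*R := by
      calc dist z 0 ≤ dist z x + dist x 0 := dist_triangle _ _ _
        _ < r/2 + R := by linarith
        _ ≤ 2*R := by linarith
    exact mem_ball.2 this
  have hvol : ∀ x : E2, volume (ball x (r/2)) = ENNReal.ofReal ((r/2)^2) * v := by
    intro x
    have := MeasureTheory.Measure.addHaar_ball (μ := volume) x (r := r/2) (by linarith)
    rwa [finrank_euclideanSpace_fin] at this
  have hsum : (t.card : ENNReal) * (ENNReal.ofReal ((r/2)^2) * v) ≤ ENNReal.ofReal ((2*R)^2) * v := by
    calc (t.card : ENNReal) * (ENNReal.ofReal ((r/2)^2) * v)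
        = ∑ x ∈ t, volume (ball x (r/2)) := by
          rw [Finset.sum_congr rfl (fun x _ => hvol x), Finset.sum_const, nsmul_eq_mul]
      _ = volume (⋃ x ∈ t, ball x (r/2)) := (measure_biUnion_finset hdisj hmeas).symm
      _ ≤ volume (ball (0:E2) (2*R)) := measure_mono hUnion
      _ = ENNReal.ofReal ((2*R)^2) * v := by
          have := MeasureTheory.Measure.addHaar_ball (μ := volume) (0:E2) (r := 2*R) (by linarith)
          rwa [finrank_euclideanSpace_fin] at this
  have hsum2 : (t.card : ENNReal) * ENNReal.ofReal ((r/2)^2) ≤ ENNReal.ofReal ((2*R)^2) := by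
    rw [← mul_assoc] at hsum
    exact (ENNReal.mul_le_mul_iff_left hvpos.ne' hvlt.ne).1 hsum
  have : ENNReal.ofReal ((t.card : ℝ) * (r/2)^2) ≤ ENNReal.ofReal ((2*R)^2) := by
    rwa [ENNReal.ofReal_mul (by positivity), ENNReal.ofReal_natCast]
  rwa [ENNReal.ofReal_le_ofReal_iff (by positivity)] at this

lemma exists_net {r R : ℝ} (hr : 0 < r) (hrR : r ≤ R) (F : Set E2)
    (hF : F ⊆ closedBall (0:E2) R) :
    ∃ T : Finset E2, (↑T ⊆ F) ∧ F ⊆ (⋃ x ∈ T, ball x r) ∧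
      (T.card : ℝ) * (r/2)^2 ≤ (2*R)^2 := by
  set S : Set (Set E2) := {s | s ⊆ F ∧ ∀ x ∈ s, ∀ y ∈ s, x ≠ y → r ≤ dist x y} with hS
  obtain ⟨m, hm⟩ := zorn_subset S (by
    intro c hc hchain
    refine ⟨⋃₀ c, ⟨?_, ?_⟩, fun s hs => subset_sUnion_of_mem hs⟩
    · exact sUnion_subset fun s hs => (hc hs).1
    · rintro x hx y hy hxy
      obtain ⟨s, hs, hxs⟩ := hx
      obtain ⟨u, hu, hyu⟩ := hy
      rcases hchain.total hs hu with h | h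
      · exact (hc hu).2 x (h hxs) y hyu hxy
      · exact (hc hs).2 x hxs y (h hyu) hxy)
  have hmF : m ⊆ F := hm.prop.1
  have hmsep := hm.prop.2
  -- covering
  have hcov : F ⊆ ⋃ x ∈ m, ball x r := by
    intro z hz
    by_contra hzc
    simp only [mem_iUnion, mem_ball, not_exists] at hzc
    push_neg at hzc
    have hzm : z ∉ m := fun h => absurd (hzc z h) (by simp [hr])
    have : insert z m ∈ S := by
      constructor
      · exact insert_subset hz hmF
      · rintro x (rfl | hx) y (rfl | hy) hxy
        · exact absurd rfl hxy
        · exact hzc y hy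
        · rw [dist_comm]; exact hzc x hx
        · exact hmsep x hx y hy hxy
    have := hm.2 this (subset_insert z m)
    exact hzm (this (mem_insert z m))
  -- finiteness
  have hfin : m.Finite := by
    by_contra hinf
    obtain ⟨t, htm, htfin, htcard⟩ :=
      Set.Infinite.exists_subset_ncard_eq hinf
        (Nat.floor ((2*R)^2 / (r/2)^2) + 1)
    have hb := card_bound hr hrR (t := htfin.toFinset)
      (fun x hx => hF (hmF (htm (htfin.mem_toFinset.1 hx))))
      (fun x hx y hy hxy => hmsep x (htm (htfin.mem_toFinset.1 hx))
        y (htm (htfin.mem_toFinset.1 hy)) hxy)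
    rw [Set.ncard_eq_toFinset_card _ htfin] at htcard
    rw [htcard] at hb
    have h1 : ((Nat.floor ((2*R)^2 / (r/2)^2) + 1 : ℕ) : ℝ) ≤ (2*R)^2 / (r/2)^2 := by
      rw [le_div_iff₀ (by positivity)]
      exact hb
    have h2 : ((Nat.floor ((2*R)^2 / (r/2)^2) : ℕ) : ℝ) + 1 ≤ (2*R)^2 / (r/2)^2 := by
      push_cast at h1 ⊢; linarith
    exact absurd (Nat.lt_floor_add_one ((2*R)^2 / (r/2)^2)) (not_lt.2 (by linarith))
  refine ⟨hfin.toFinset, ?_, ?_, ?_⟩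
  · rw [Set.Finite.coe_toFinset]; exact hmF
  · intro z hz
    obtain ⟨x, hx, hzx⟩ := mem_iUnion₂.1 (hcov hz)
    exact mem_iUnion₂.2 ⟨x, hfin.mem_toFinset.2 hx, hzx⟩
  · apply card_bound hr hrR
    · exact fun x hx => hF (hmF (hfin.mem_toFinset.1 hx))
    · exact fun x hx y hy hxy => hmsep x (hfin.mem_toFinset.1 hx) y (hfin.mem_toFinset.1 hy) hxy

theorem stmt5 (r L R : ℝ) (hr : 0 < r) (hL : 0 < L) (hR : 10 * r ≤ R)
    (Ω : Set E2) (hΩo : IsOpen Ω) (hΩb : Bornology.IsBounded Ω)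
    (hΩR : Ω ⊆ ball (0 : E2) R) (hlip : IsLipDomain r L Ω) :
    μH[1] (frontier Ω) ≤
      ENNReal.ofReal ((1 / 2) * (11 / 9) ^ 2 * 48 * Real.sqrt (1 + L ^ 2) * R ^ 2 / r) := by
  have hR0 : 0 < R := by linarith
  have hrR : r ≤ R := by linarith
  have hFR : frontier Ω ⊆ closedBall (0:E2) R := by
    calc frontier Ω ⊆ closure Ω := frontier_subset_closure
      _ ⊆ closure (ball (0:E2) R) := closure_mono hΩR
      _ = closedBall (0:E2) R := closure_ball _ hR0.ne'
  obtain ⟨T, hT1, hT2, hT3⟩ := exists_net hr hrR (frontier Ω) hFR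
  have hcard : (T.card : ℝ) ≤ 16 * R^2 / r^2 := by
    rw [le_div_iff₀ (by positivity)]
    nlinarith
  have hs : Real.sqrt (1 + L^2) ≥ 0 := Real.sqrt_nonneg _
  have step1 : μH[1] (frontier Ω) ≤
      ∑ x ∈ T, μH[1] (frontier Ω ∩ ball x r) := by
    refine le_trans (measure_mono ?_) (measure_biUnion_finset_le _ _)
    intro z hz
    obtain ⟨x, hx, hzx⟩ := mem_iUnion₂.1 (hT2 hz)
    exact mem_iUnion₂.2 ⟨x, hx, hz, hzx⟩
  have step2 : ∑ x ∈ T, μH[1] (frontier Ω ∩ ball x r) ≤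
      T.card * ENNReal.ofReal (Real.sqrt (1 + L^2) * (2 * r)) := by
    rw [← nsmul_eq_mul]
    apply Finset.sum_le_card_nsmul
    intro x hx
    obtain ⟨A, φ, hA, hφ, -, hiff⟩ := hlip x (hT1 hx)
    exact local_bound hr hL.le hΩo A φ hA hφ hiff
  have step3 : (T.card : ENNReal) * ENNReal.ofReal (Real.sqrt (1 + L^2) * (2 * r)) ≤
      ENNReal.ofReal ((1 / 2) * (11 / 9) ^ 2 * 48 * Real.sqrt (1 + L ^ 2) * R ^ 2 / r) := by
    rw [← ENNReal.ofReal_natCast, ← ENNReal.ofReal_mul (by positivity)]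
    apply ENNReal.ofReal_le_ofReal
    have h1 : (T.card : ℝ) * (Real.sqrt (1 + L^2) * (2*r)) ≤
        (16 * R^2 / r^2) * (Real.sqrt (1 + L^2) * (2*r)) :=
      mul_le_mul_of_nonneg_right hcard (by positivity)
    have h2 : (16 * R^2 / r^2) * (Real.sqrt (1 + L^2) * (2*r)) =
        32 * Real.sqrt (1 + L^2) * R^2 / r := by field_simp; ring
    have h3 : 32 * Real.sqrt (1 + L^2) * R^2 / r ≤
        (1 / 2) * (11 / 9) ^ 2 * 48 * Real.sqrt (1 + L ^ 2) * R ^ 2 / r := by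
      gcongr
      norm_num
    linarith [h1, h2 ▸ h1]
  exact le_trans step1 (le_trans step2 step3)
end
end

section
/- Let Ω ⊂ ℝ² be a bounded open set which is Lipschitz with constants r and L. Then there exist constants c₂ ∈ (0,1] and C₁ > 0, depending on L only, such that for every d with 0 < d ≤ c₂ r, the Lebesgue measure of the closed d-neighborhood of the boundary satisfies |B̄_d(∂Ω)| ≤ C₁ ℋ¹(∂Ω) d. -/
open MeasureTheory Metric Set

noncomputable section

def pt (a b : ℝ) : E2 := (WithLp.equiv 2 (Fin 2 → ℝ)).symm ![a, b]

lemma pt_apply0 (a b : ℝ) : pt a b 0 = a := rfl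
lemma pt_apply1 (a b : ℝ) : pt a b 1 = b := rfl

lemma pt_zero : pt 0 0 = (0 : E2) := by ext i; fin_cases i <;> rfl

lemma dist_pt (a b a' b' : ℝ) :
    dist (pt a b) (pt a' b') = Real.sqrt ((a - a') ^ 2 + (b - b') ^ 2) := by
  rw [EuclideanSpace.dist_eq, Fin.sum_univ_two]
  simp [pt, Real.dist_eq, sq_abs]

lemma lip_coord (i : Fin 2) : LipschitzWith 1 (fun y : E2 => y i) := by
  apply LipschitzWith.of_dist_le_mul
  intro x y
  rw [NNReal.coe_one, one_mul, EuclideanSpace.dist_eq]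
  have h : dist (x i) (y i) = Real.sqrt (dist (x i) (y i) ^ 2) :=
    (Real.sqrt_sq dist_nonneg).symm
  rw [h]
  apply Real.sqrt_le_sqrt
  exact Finset.single_le_sum (f := fun j => dist (x j) (y j) ^ 2)
    (fun j _ => sq_nonneg _) (Finset.mem_univ i)

lemma density {r L : ℝ} (hL : 0 ≤ L) {Ω : Set E2} (hΩ : IsOpen Ω)
    (hlip : IsLipDomain r L Ω) {x : E2} (hx : x ∈ frontier Ω)
    {d : ℝ} (hd : 0 < d) (hdr : d ≤ r) :
    ENNReal.ofReal (2 * (d / Real.sqrt (1 + L ^ 2))) ≤ μH[1] (frontier Ω ∩ ball x d) := by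
  obtain ⟨A, φ, hAx, hφ, hφ0, hiff⟩ := hlip x hx
  have hsq : (0:ℝ) < Real.sqrt (1 + L ^ 2) := Real.sqrt_pos.2 (by positivity)
  set s : ℝ := d / Real.sqrt (1 + L ^ 2) with hs_def
  have hs : 0 < s := div_pos hd hsq
  set g : ℝ → E2 := fun t => A.symm (pt t (φ t)) with hg_def
  have hAg : ∀ t, A (g t) = pt t (φ t) := fun t => A.apply_symm_apply _
  have hφt : ∀ t : ℝ, |φ t| ≤ L * |t| := by
    intro t
    have h1 := hφ.dist_le_mul t 0
    rw [Real.coe_toNNReal L hL] at h1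
    simpa [hφ0, Real.dist_eq] using h1
  have hdistx : ∀ t, dist (g t) x = Real.sqrt (t ^ 2 + (φ t) ^ 2) := by
    intro t
    rw [← A.dist_eq (g t) x, hAg, hAx, ← pt_zero, dist_pt]
    ring_nf
  have hdlt : ∀ t : ℝ, |t| < s → dist (g t) x < d := by
    intro t ht
    rw [hdistx]
    have h1 : t ^ 2 + (φ t) ^ 2 ≤ (1 + L ^ 2) * t ^ 2 := by
      nlinarith [hφt t, sq_abs (φ t), sq_abs t, abs_nonneg (φ t), abs_nonneg t,
        mul_nonneg hL (abs_nonneg t)]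
    calc Real.sqrt (t ^ 2 + (φ t) ^ 2) ≤ Real.sqrt ((1 + L ^ 2) * t ^ 2) :=
          Real.sqrt_le_sqrt h1
      _ = Real.sqrt (1 + L ^ 2) * |t| := by
          rw [Real.sqrt_mul (by positivity), Real.sqrt_sq_eq_abs]
      _ < Real.sqrt (1 + L ^ 2) * s := by
          exact mul_lt_mul_of_pos_left ht hsq
      _ = d := by rw [hs_def]; field_simp [hsq.ne']
  have hmem : ∀ t : ℝ, |t| < s → g t ∈ frontier Ω ∩ ball x d := by
    intro t ht
    have hbd : dist (g t) x < d := hdlt t ht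
    have hbr : g t ∈ ball x r := mem_ball.2 (lt_of_lt_of_le hbd hdr)
    have hnotin : g t ∉ Ω := by
      intro hmemΩ
      have h2 := (hiff _ hbr).1 hmemΩ
      rw [hAg, pt_apply0, pt_apply1] at h2
      exact lt_irrefl _ h2
    have hclos : g t ∈ closure Ω := by
      rw [Metric.mem_closure_iff]
      intro ε hε
      set δ : ℝ := min (ε / 2) ((r - dist (g t) x) / 2) with hδ_def
      have hrd : dist (g t) x < r := lt_of_lt_of_le hbd hdr
      have hδpos : 0 < δ := lt_min (by linarith) (by linarith)
      have hδr : δ ≤ (r - dist (g t) x) / 2 := min_le_right _ _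
      have hδε : δ ≤ ε / 2 := min_le_left _ _
      refine ⟨A.symm (pt t (φ t - δ)), ?_, ?_⟩
      · have hdgz : dist (A.symm (pt t (φ t - δ))) (g t) = δ := by
          rw [hg_def]
          simp only []
          rw [A.symm.dist_eq, dist_pt]
          simp [sub_sub_cancel_left, abs_of_pos hδpos]
          rw [Real.sqrt_sq hδpos.le]
        have hzr : A.symm (pt t (φ t - δ)) ∈ ball x r := by
          rw [mem_ball]
          calc dist (A.symm (pt t (φ t - δ))) x
              ≤ dist (A.symm (pt t (φ t - δ))) (g t) + dist (g t) x := dist_triangle _ _ _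
            _ = δ + dist (g t) x := by rw [hdgz]
            _ < r := by linarith
        refine (hiff _ hzr).2 ?_
        rw [A.apply_symm_apply, pt_apply0, pt_apply1]
        linarith
      · rw [dist_comm, hg_def]
        simp only []
        rw [A.symm.dist_eq, dist_pt]
        have h9 : (t - t) ^ 2 + (φ t - δ - φ t) ^ 2 = δ ^ 2 := by ring
        rw [h9, Real.sqrt_sq hδpos.le]; linarith
    exact ⟨⟨hclos, by rwa [hΩ.interior_eq]⟩, mem_ball.2 hbd⟩
  have himg : Ioo (-s) s ⊆ (fun y : E2 => A y 0) '' (frontier Ω ∩ ball x d) := by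
    intro t ht
    refine ⟨g t, hmem t (abs_lt.2 ⟨ht.1, ht.2⟩), ?_⟩
    show A (g t) 0 = t
    rw [hAg, pt_apply0]
  have hlipc : LipschitzWith 1 (fun y : E2 => A y 0) := by
    simpa [Function.comp_def] using (lip_coord 0).comp A.isometry.lipschitz
  calc ENNReal.ofReal (2 * s) = μH[1] (Ioo (-s) s) := by
        rw [MeasureTheory.hausdorffMeasure_real, Real.volume_Ioo]
        congr 1; ring
    _ ≤ μH[1] ((fun y : E2 => A y 0) '' (frontier Ω ∩ ball x d)) := measure_mono himg
    _ ≤ (1 : ENNReal) ^ (1:ℝ) * μH[1] (frontier Ω ∩ ball x d) := by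
        simpa using hlipc.hausdorffMeasure_image_le zero_le_one (frontier Ω ∩ ball x d)
    _ = μH[1] (frontier Ω ∩ ball x d) := by simp

theorem stmt6 (L : ℝ) (hL : 0 < L) :
    ∃ c₂ C₁ : ℝ, 0 < c₂ ∧ c₂ ≤ 1 ∧ 0 < C₁ ∧
      ∀ r : ℝ, 0 < r →
      ∀ Ω : Set E2, IsOpen Ω → Bornology.IsBounded Ω → IsLipDomain r L Ω →
      ∀ d : ℝ, 0 < d → d ≤ c₂ * r →
        volume (cthickening d (frontier Ω)) ≤
          ENNReal.ofReal C₁ * μH[1] (frontier Ω) * ENNReal.ofReal d := by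
  have hsq : (0:ℝ) < Real.sqrt (1 + L ^ 2) := Real.sqrt_pos.2 (by positivity)
  refine ⟨1, 8 * Real.pi * Real.sqrt (1 + L ^ 2), one_pos, le_refl 1, by positivity, ?_⟩
  intro r hr Ω hΩ hbdd hlip d hd hdr
  rw [one_mul] at hdr
  set C₁ : ℝ := 8 * Real.pi * Real.sqrt (1 + L ^ 2) with hC₁
  -- Vitali
  obtain ⟨u, hu_sub, hu_disj, hu_cov⟩ :=
    Vitali.exists_disjoint_subfamily_covering_enlargement_closedBall (frontier Ω)
      (id : E2 → E2) (fun _ => d) d (fun a _ => le_rfl) 4 (by norm_num)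
  simp only [id_eq] at hu_disj hu_cov
  have hu_count : u.Countable := by
    apply hu_disj.countable_of_nonempty_interior
    intro b _
    exact ⟨b, ball_subset_interior_closedBall (mem_ball_self hd)⟩
  -- covering
  have hcover : cthickening d (frontier Ω) ⊆ ⋃ b ∈ u, closedBall b (4 * d) := by
    rw [isClosed_frontier.cthickening_eq_biUnion_closedBall hd.le]
    intro y hy
    obtain ⟨a, ha, hya⟩ := mem_iUnion₂.1 hy
    obtain ⟨b, hb, hsub⟩ := hu_cov a ha
    exact mem_biUnion hb (hsub hya)
  -- volume of each covering ball
  have hball : ∀ b : E2, volume (closedBall b (4 * d)) =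
      ENNReal.ofReal (C₁ * d) * ENNReal.ofReal (2 * (d / Real.sqrt (1 + L ^ 2))) := by
    intro b
    rw [EuclideanSpace.volume_closedBall]
    have hcard : Fintype.card (Fin 2) = 2 := by simp
    rw [hcard]
    have h1 : Real.sqrt Real.pi ^ 2 / Real.Gamma ((2:ℕ) / 2 + 1) = Real.pi := by
      rw [Real.sq_sqrt Real.pi_pos.le]
      norm_num [Real.Gamma_two]
    rw [h1, ← ENNReal.ofReal_pow (by positivity), ← ENNReal.ofReal_mul (by positivity),
      ← ENNReal.ofReal_mul (by positivity)]
    congr 1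
    have hne : Real.sqrt (1 + L ^ 2) ≠ 0 := hsq.ne'
    field_simp [hC₁]
    ring
  -- disjoint boundary pieces
  have hpieces : ∀ b ∈ u,
      ENNReal.ofReal (2 * (d / Real.sqrt (1 + L ^ 2))) ≤ μH[1] (frontier Ω ∩ ball b d) :=
    fun b hb => density hL.le hΩ hlip (hu_sub hb) hd hdr
  have hdisj2 : u.PairwiseDisjoint fun b => frontier Ω ∩ ball b d := by
    refine hu_disj.mono ?_
    intro b
    exact inter_subset_right.trans ball_subset_closedBall
  have hsum : (∑' b : u, μH[1] (frontier Ω ∩ ball (b : E2) d)) ≤ μH[1] (frontier Ω) := by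
    rw [← measure_biUnion hu_count hdisj2
      (fun b _ => (isClosed_frontier.measurableSet).inter measurableSet_ball)]
    exact measure_mono (iUnion₂_subset fun b _ => inter_subset_left)
  calc volume (cthickening d (frontier Ω))
      ≤ volume (⋃ b ∈ u, closedBall b (4 * d)) := measure_mono hcover
    _ ≤ ∑' b : u, volume (closedBall (b : E2) (4 * d)) := measure_biUnion_le _ hu_count _
    _ = ∑' b : u, ENNReal.ofReal (C₁ * d) * ENNReal.ofReal (2 * (d / Real.sqrt (1 + L ^ 2))) := by
        simp_rw [hball]
    _ = ENNReal.ofReal (C₁ * d) * ∑' b : u, ENNReal.ofReal (2 * (d / Real.sqrt (1 + L ^ 2))) :=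
        ENNReal.tsum_mul_left
    _ ≤ ENNReal.ofReal (C₁ * d) * ∑' b : u, μH[1] (frontier Ω ∩ ball (b : E2) d) := by
        gcongr with b
        exact hpieces b b.2
    _ ≤ ENNReal.ofReal (C₁ * d) * μH[1] (frontier Ω) := by gcongr
    _ = ENNReal.ofReal C₁ * μH[1] (frontier Ω) * ENNReal.ofReal d := by
        rw [ENNReal.ofReal_mul (by positivity)]
        ring
end
end

section
/- Fix positive constants r, L, R. There exists a constant c₃ ∈ (0, π], depending on L only, such that for any two bounded open sets Ω₁, Ω₂ ⊂ B_R which are Lipschitz with constants r and L, denoting d₁ = d_H(Ω̄₁, Ω̄₂) and d₂ = |Ω₁ Δ Ω₂|, one has d₂ ≥ c₃ min{r², d₁²}. In particular, with C₃ = c₃^{−1/2}: if d₂ ≤ (c₃/2) r² then d₁ ≤ C₃ d₂^{1/2}, and if d₂ ≥ (c₃/2) r² then d₁ ≤ (2√2 C₃/r) R d₂^{1/2}. -/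
open MeasureTheory Metric Set

noncomputable section

lemma E2.vol_ball (c : E2) (s : ℝ) (hs : 0 ≤ s) :
    (volume (ball c s)).toReal = Real.pi * s ^ 2 := by
  rw [InnerProductSpace.volume_ball c s]
  simp only [finrank_euclideanSpace_fin]
  rw [show ((2 : ℕ) : ℝ) / 2 + 1 = 2 by norm_num, Real.Gamma_two,
    Real.sq_sqrt Real.pi_nonneg]
  rw [div_one, ENNReal.toReal_mul, ENNReal.toReal_pow, ENNReal.toReal_ofReal hs,
    ENNReal.toReal_ofReal Real.pi_nonneg]
  ring

lemma E2.coord_le_dist (w q : E2) (i : Fin 2) : |w i - q i| ≤ dist w q := by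
  rw [EuclideanSpace.dist_eq]
  rw [← Real.sqrt_sq_eq_abs]
  apply Real.sqrt_le_sqrt
  rw [Fin.sum_univ_two]
  fin_cases i <;> simp [Real.dist_eq] <;> positivity

lemma key_lemma (L r δ : ℝ) (hL : 0 < L) (hr : 0 < r) (hδ : 0 < δ)
    (Ω₁ Ω₂ : Set E2) (h1 : IsOpen Ω₁) (lip : IsLipDomain r L Ω₁)
    (x : E2) (hx : x ∈ closure Ω₁) (hfar : ∀ y ∈ Ω₂, δ ≤ dist x y)
    (hfin : volume (Ω₁ \ Ω₂) ≠ ⊤) :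
    Real.pi / (64 * (1 + L) ^ 2) * min r δ ^ 2 ≤ (volume (Ω₁ \ Ω₂)).toReal := by
  set m := min r δ with hm
  have hm0 : 0 < m := lt_min hr hδ
  set ρ := m / 4 with hρdef
  have hρ0 : 0 < ρ := by positivity
  set s := ρ / (2 * (1 + L)) with hsdef
  have h1L : (0:ℝ) < 1 + L := by linarith
  have hs0 : 0 < s := by positivity
  have hsρ : s ≤ ρ / 2 := by
    rw [hsdef, div_le_div_iff₀ (by positivity) (by norm_num)]
    nlinarith
  have hρr : ρ ≤ r := le_trans (by rw [hρdef]; linarith [min_le_left r δ]) (le_refl r)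
  have hρδ : ρ ≤ δ / 4 := by rw [hρdef]; have := min_le_right r δ; linarith
  -- find a ball of radius s inside Ω₁ \ Ω₂
  have main : ∃ c : E2, ball c s ⊆ Ω₁ \ Ω₂ := by
    by_cases hball : ball x ρ ⊆ Ω₁
    · refine ⟨x, fun y hy => ?_⟩
      have hyx : dist y x < ρ := lt_of_lt_of_le (mem_ball.mp hy) (by linarith)
      constructor
      · exact hball (mem_ball.mpr hyx)
      · intro hy2
        have := hfar y hy2
        rw [dist_comm] at this
        linarith [hyx, hρδ]
    · -- there is a frontier point in ball x ρ
      have hz : (ball x ρ ∩ frontier Ω₁).Nonempty := by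
        by_contra hfe
        rw [not_nonempty_iff_eq_empty] at hfe
        apply hball
        -- connectedness argument
        have hpre : IsPreconnected (ball x ρ) := (convex_ball x ρ).isPreconnected
        have hsub : ball x ρ ⊆ Ω₁ ∪ (closure Ω₁)ᶜ := by
          intro y hy
          by_cases hyc : y ∈ closure Ω₁
          · left
            rcases (mem_union _ _ _).mp ((closure_eq_interior_union_frontier Ω₁ ▸ hyc)) with h | h
            · exact interior_subset h
            · exact absurd (mem_inter hy h) (by rw [hfe]; exact notMem_empty y)
          · right; exact hyc
        have hxball : (ball x ρ ∩ Ω₁).Nonempty := by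
          rcases _root_.mem_closure_iff.mp hx (ball x ρ) isOpen_ball (mem_ball_self hρ0) with
            ⟨y, hy1, hy2⟩
          exact ⟨y, hy1, hy2⟩
        intro y hy
        by_contra hyn
        have hyc : y ∈ (closure Ω₁)ᶜ := by
          rcases hsub hy with h | h
          · exact absurd h hyn
          · exact h
        have := hpre Ω₁ (closure Ω₁)ᶜ h1 (isOpen_compl_iff.mpr isClosed_closure)
          hsub hxball ⟨y, hy, hyc⟩
        rcases this with ⟨w, _, hw1, hw2⟩
        exact hw2 (subset_closure hw1)
      obtain ⟨z, hzball, hzfr⟩ := hz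
      obtain ⟨A, φ, hAz, hφ, hφ0, hchart⟩ := lip z hzfr
      set q : E2 := (WithLp.equiv 2 (Fin 2 → ℝ)).symm ![0, -(ρ/2)] with hq
      have hq0 : q 0 = 0 := by rw [hq]; simp
      have hq1 : q 1 = -(ρ/2) := by rw [hq]; simp
      have hqnorm : dist q 0 = ρ / 2 := by
        rw [EuclideanSpace.dist_eq, Fin.sum_univ_two]
        simp only [hq0, hq1]
        rw [show dist (0:ℝ) ((0:E2) 0) = 0 by simp, show dist (-(ρ/2)) ((0:E2) 1) = ρ/2 by
          simp [Real.dist_eq, abs_of_pos hρ0]]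
        rw [show (0:ℝ)^2 + (ρ/2)^2 = (ρ/2)^2 by ring, Real.sqrt_sq (by positivity)]
      refine ⟨A.symm q, fun y hy => ?_⟩
      have hdwq : dist (A y) q < s := by
        have : dist y (A.symm q) < s := mem_ball.mp hy
        rwa [← A.dist_eq y (A.symm q), A.apply_symm_apply] at this
      have hw0 : |(A y) 0| < s := by
        have := E2.coord_le_dist (A y) q 0
        rw [hq0, sub_zero] at this
        linarith
      have hw1 : |(A y) 1 + ρ/2| < s := by
        have := E2.coord_le_dist (A y) q 1
        rw [hq1, sub_neg_eq_add] at this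
        linarith
      have hyz : dist y z < ρ := by
        have h1' : dist (A y) (0 : E2) ≤ dist (A y) q + dist q 0 := dist_triangle _ _ _
        have h2' : dist y z = dist (A y) (0 : E2) := by rw [← hAz, A.dist_eq]
        rw [h2']
        calc dist (A y) (0:E2) ≤ dist (A y) q + dist q 0 := h1'
          _ < s + ρ/2 := by rw [hqnorm]; linarith
          _ ≤ ρ := by linarith
      have hyΩ₁ : y ∈ Ω₁ := by
        rw [hchart y (mem_ball.mpr (lt_of_lt_of_le hyz hρr))]
        have hφlb : -(L * |(A y) 0|) ≤ φ ((A y) 0) := by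
          have := hφ.dist_le_mul ((A y) 0) 0
          rw [Real.dist_eq, Real.dist_eq, hφ0, sub_zero, sub_zero,
            Real.coe_toNNReal L hL.le] at this
          have h2 := abs_le.mp this
          linarith [h2.1]
        have h1s : (1 + L) * s = ρ / 2 := by
          rw [hsdef]; field_simp
        have habs1 : (A y) 1 < -(ρ/2) + s := by
          have := abs_lt.mp hw1; linarith [this.2]
        have : L * |(A y) 0| ≤ L * s := by
          apply mul_le_mul_of_nonneg_left (le_of_lt hw0) hL.le
        nlinarith
      have hyΩ₂ : y ∉ Ω₂ := by
        intro hy2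
        have hd := hfar y hy2
        have : dist x y ≤ dist x z + dist z y := dist_triangle _ _ _
        rw [dist_comm z y] at this
        have hxz : dist x z < ρ := by rw [dist_comm]; exact mem_ball.mp hzball
        linarith
      exact ⟨hyΩ₁, hyΩ₂⟩
  obtain ⟨c, hc⟩ := main
  have hvol : Real.pi * s ^ 2 ≤ (volume (Ω₁ \ Ω₂)).toReal := by
    rw [← E2.vol_ball c s hs0.le]
    exact ENNReal.toReal_mono hfin (measure_mono hc)
  have heq : Real.pi / (64 * (1 + L) ^ 2) * m ^ 2 = Real.pi * s ^ 2 := by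
    rw [hsdef, hρdef]
    field_simp
    ring
  linarith [heq ▸ hvol]

theorem stmt8 (L : ℝ) (hL : 0 < L) :
    ∃ c₃ : ℝ, 0 < c₃ ∧ c₃ ≤ Real.pi ∧
      ∀ r R : ℝ, 0 < r → 0 < R →
      ∀ Ω₁ Ω₂ : Set E2, IsOpen Ω₁ → IsOpen Ω₂ → Ω₁.Nonempty → Ω₂.Nonempty →
        Ω₁ ⊆ ball (0 : E2) R → Ω₂ ⊆ ball (0 : E2) R →
        IsLipDomain r L Ω₁ → IsLipDomain r L Ω₂ →
        c₃ * min (r ^ 2) (hausdorffDist (closure Ω₁) (closure Ω₂) ^ 2) ≤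
            (volume (symmDiff Ω₁ Ω₂)).toReal ∧
        ((volume (symmDiff Ω₁ Ω₂)).toReal ≤ c₃ / 2 * r ^ 2 →
          hausdorffDist (closure Ω₁) (closure Ω₂) ≤
            c₃ ^ (-(1 / 2 : ℝ)) * (volume (symmDiff Ω₁ Ω₂)).toReal ^ (1 / 2 : ℝ)) ∧
        (c₃ / 2 * r ^ 2 ≤ (volume (symmDiff Ω₁ Ω₂)).toReal →
          hausdorffDist (closure Ω₁) (closure Ω₂) ≤
            2 * Real.sqrt 2 * c₃ ^ (-(1 / 2 : ℝ)) / r * R *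
              (volume (symmDiff Ω₁ Ω₂)).toReal ^ (1 / 2 : ℝ)) := by
  set c₃ := Real.pi / (64 * (1 + L) ^ 2) with hc₃def
  have h1L : (0:ℝ) < 1 + L := by linarith
  have hc₃ : 0 < c₃ := by
    apply div_pos Real.pi_pos; positivity
  refine ⟨c₃, hc₃, ?_, ?_⟩
  · -- c₃ ≤ π
    rw [hc₃def]
    apply div_le_self Real.pi_nonneg
    nlinarith
  intro r R hr hR Ω₁ Ω₂ ho1 ho2 hne1 hne2 hb1 hb2 lip1 lip2
  set d := hausdorffDist (closure Ω₁) (closure Ω₂) with hddef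
  set V := (volume (symmDiff Ω₁ Ω₂)).toReal with hVdef
  have hd0 : 0 ≤ d := Metric.hausdorffDist_nonneg
  have hV0 : 0 ≤ V := ENNReal.toReal_nonneg
  have hsdsub : symmDiff Ω₁ Ω₂ ⊆ ball (0 : E2) R := by
    rw [Set.symmDiff_def]
    exact union_subset (diff_subset.trans hb1) (diff_subset.trans hb2)
  have hfinS : volume (symmDiff Ω₁ Ω₂) ≠ ⊤ :=
    ((measure_mono hsdsub).trans_lt measure_ball_lt_top).ne
  have hfin1 : volume (Ω₁ \ Ω₂) ≠ ⊤ :=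
    ((measure_mono (diff_subset.trans hb1)).trans_lt measure_ball_lt_top).ne
  have hfin2 : volume (Ω₂ \ Ω₁) ≠ ⊤ :=
    ((measure_mono (diff_subset.trans hb2)).trans_lt measure_ball_lt_top).ne
  have hV1 : (volume (Ω₁ \ Ω₂)).toReal ≤ V := by
    apply ENNReal.toReal_mono hfinS
    apply measure_mono
    rw [Set.symmDiff_def]; exact subset_union_left
  have hV2 : (volume (Ω₂ \ Ω₁)).toReal ≤ V := by
    apply ENNReal.toReal_mono hfinS
    apply measure_mono
    rw [Set.symmDiff_def]; exact subset_union_right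
  -- Part 1
  have part1 : c₃ * min (r ^ 2) (d ^ 2) ≤ V := by
    rcases eq_or_lt_of_le hd0 with hdz | hdpos
    · rw [← hdz]
      rw [show (0:ℝ)^2 = 0 by ring, min_eq_right (sq_nonneg r)]
      simpa using hV0
    · have hmin : min (r ^ 2) (d ^ 2) = min r d ^ 2 := by
        rcases le_total r d with h | h
        · rw [min_eq_left h, min_eq_left (by nlinarith : r^2 ≤ d^2)]
        · rw [min_eq_right h, min_eq_right (by nlinarith : d^2 ≤ r^2)]
      rw [hmin]
      have claim : ∀ ε ∈ Ioo (0:ℝ) d, c₃ * min r (d - ε) ^ 2 ≤ V := by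
        intro ε hε
        have hdε : 0 < d - ε := by linarith [hε.2]
        by_cases hc1 : ∃ p ∈ closure Ω₁, d - ε < Metric.infDist p (closure Ω₂)
        · obtain ⟨p, hp, hplt⟩ := hc1
          have hfar : ∀ y ∈ Ω₂, d - ε ≤ dist p y := fun y hy =>
            le_trans hplt.le (Metric.infDist_le_dist_of_mem (subset_closure hy))
          exact le_trans (key_lemma L r (d - ε) hL hr hdε Ω₁ Ω₂ ho1 lip1 p hp hfar hfin1) hV1
        · by_cases hc2 : ∃ p ∈ closure Ω₂, d - ε < Metric.infDist p (closure Ω₁)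
          · obtain ⟨p, hp, hplt⟩ := hc2
            have hfar : ∀ y ∈ Ω₁, d - ε ≤ dist p y := fun y hy =>
              le_trans hplt.le (Metric.infDist_le_dist_of_mem (subset_closure hy))
            exact le_trans (key_lemma L r (d - ε) hL hr hdε Ω₂ Ω₁ ho2 lip2 p hp hfar hfin2) hV2
          · exfalso
            push_neg at hc1 hc2
            have : d ≤ d - ε :=
              Metric.hausdorffDist_le_of_infDist hdε.le hc1 hc2
            linarith [hε.1]
      have htend : Filter.Tendsto (fun ε => c₃ * min r (d - ε) ^ 2)
          (nhdsWithin 0 (Ioi (0:ℝ))) (nhds (c₃ * min r d ^ 2)) := by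
        have hcont : Continuous (fun ε : ℝ => c₃ * min r (d - ε) ^ 2) := by
          apply continuous_const.mul
          exact (continuous_const.min (continuous_const.sub continuous_id)).pow 2
        have := hcont.tendsto 0
        simp only [sub_zero] at this
        exact this.mono_left nhdsWithin_le_nhds
      apply le_of_tendsto htend
      filter_upwards [Ioo_mem_nhdsGT_of_mem (by constructor <;> [exact le_refl 0; exact hdpos])]
        with ε hε using claim ε hε
  refine ⟨part1, ?_, ?_⟩
  · -- Part 2
    intro hsmall
    have hd2r2 : d ^ 2 ≤ r ^ 2 := by
      by_contra h
      push_neg at h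
      rw [min_eq_left h.le] at part1
      have h0 : 0 < c₃ * r ^ 2 := by positivity
      nlinarith [h0]
    rw [min_eq_right hd2r2] at part1
    have e1 : c₃ ^ (-(1/2 : ℝ)) = (Real.sqrt c₃)⁻¹ := by
      rw [Real.rpow_neg hc₃.le, Real.sqrt_eq_rpow]
    have e2 : V ^ ((1:ℝ)/2) = Real.sqrt V := by
      rw [Real.sqrt_eq_rpow]
    rw [e1]
    rw [show (1/2 : ℝ) = ((1:ℝ)/2) by norm_num, e2]
    have ha : 0 < Real.sqrt c₃ := Real.sqrt_pos.mpr hc₃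
    have hdle : d ≤ Real.sqrt (V / c₃) := by
      rw [Real.le_sqrt hd0 (by positivity)]
      rw [le_div_iff₀ hc₃]
      linarith [part1]
    calc d ≤ Real.sqrt (V / c₃) := hdle
      _ = (Real.sqrt c₃)⁻¹ * Real.sqrt V := by
          rw [Real.sqrt_div hV0]
          ring
  · -- Part 3
    intro hbig
    have hd2R : d ≤ 2 * R := by
      have hc1 : closure Ω₁ ⊆ closedBall (0:E2) R :=
        (closure_mono hb1).trans closure_ball_subset_closedBall
      have hc2 : closure Ω₂ ⊆ closedBall (0:E2) R :=
        (closure_mono hb2).trans closure_ball_subset_closedBall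
      apply Metric.hausdorffDist_le_of_mem_dist (by positivity)
      · intro p hp
        obtain ⟨y0, hy0⟩ := hne2
        refine ⟨y0, subset_closure hy0, ?_⟩
        have h1' : dist p (0:E2) ≤ R := mem_closedBall.mp (hc1 hp)
        have h2' : dist (0:E2) y0 ≤ R := by
          rw [dist_comm]; exact (mem_ball.mp (hb2 hy0)).le
        calc dist p y0 ≤ dist p 0 + dist 0 y0 := dist_triangle _ _ _
          _ ≤ 2 * R := by linarith
      · intro p hp
        obtain ⟨y0, hy0⟩ := hne1
        refine ⟨y0, subset_closure hy0, ?_⟩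
        have h1' : dist p (0:E2) ≤ R := mem_closedBall.mp (hc2 hp)
        have h2' : dist (0:E2) y0 ≤ R := by
          rw [dist_comm]; exact (mem_ball.mp (hb1 hy0)).le
        calc dist p y0 ≤ dist p 0 + dist 0 y0 := dist_triangle _ _ _
          _ ≤ 2 * R := by linarith
    have e1 : c₃ ^ (-(1/2 : ℝ)) = (Real.sqrt c₃)⁻¹ := by
      rw [Real.rpow_neg hc₃.le, Real.sqrt_eq_rpow]
    have e2 : V ^ ((1:ℝ)/2) = Real.sqrt V := by
      rw [Real.sqrt_eq_rpow]
    rw [e1, show (1/2 : ℝ) = ((1:ℝ)/2) by norm_num, e2]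
    set a := Real.sqrt c₃ with hadef
    set b := Real.sqrt 2 with hbdef
    set t := Real.sqrt V with htdef
    have ha : 0 < a := Real.sqrt_pos.mpr hc₃
    have hb : 0 < b := Real.sqrt_pos.mpr (by norm_num)
    have ha2 : a ^ 2 = c₃ := Real.sq_sqrt hc₃.le
    have hb2' : b ^ 2 = 2 := Real.sq_sqrt (by norm_num)
    have harb : a * r / b ≤ t := by
      rw [htdef]
      have : Real.sqrt (c₃ / 2 * r ^ 2) = a * r / b := by
        rw [show c₃ / 2 * r ^ 2 = (a * r / b) ^ 2 by
          rw [div_pow, mul_pow, ha2, hb2']; ring]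
        exact Real.sqrt_sq (by positivity)
      rw [← this]
      exact Real.sqrt_le_sqrt hbig
    have harb' : a * r ≤ b * t := by
      rw [div_le_iff₀ hb] at harb; linarith [harb]
    calc d ≤ 2 * R := hd2R
      _ ≤ 2 * b * a⁻¹ / r * R * t := by
          rw [div_mul_eq_mul_div, div_mul_eq_mul_div, le_div_iff₀ hr]
          have h5 : 2 * R * a⁻¹ * (a * r) ≤ 2 * R * a⁻¹ * (b * t) :=
            mul_le_mul_of_nonneg_left harb' (by positivity)
          calc 2 * R * r = 2 * R * a⁻¹ * (a * r) := by field_simp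
            _ ≤ 2 * R * a⁻¹ * (b * t) := h5
            _ = 2 * b * a⁻¹ * R * t := by ring
end
end
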